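/- arXiv:2104.14652 — 3 statements merged into one kernel-verified Lean document; each statement's English description precedes it below -/
import Mathlib

section
/- For τ ≥ 0, k a natural number, and C = τ/2, the k-th Chebyshev coefficient of the function t ↦ exp(−τ(t+1)) on [−1,1], defined by c_k(τ) = (2/π) ∫₀^π cos(kθ) exp(−τ(cos θ + 1)) dθ, equals (−1)^k · 2 C^k exp(−τ)/k! · Σ_{i=0}^∞ C^(2i) k!/(i!(k+i)!). -/
/-- The `k`-th Chebyshev coefficient of `t ↦ exp (-τ (t+1))` on `[-1,1]`. -/
noncomputable def chebCoeff (τ : ℝ) (k : ℕ) : ℝ :=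
  (2 / Real.pi) * ∫ θ in (0:ℝ)..Real.pi,
    Real.cos (k * θ) * Real.exp (-τ * (Real.cos θ + 1))

open Real MeasureTheory Function

noncomputable def Jval (k n : ℕ) : ℝ :=
  if k ≤ n ∧ (n - k) % 2 = 0 then Real.pi / 2 ^ n * (n.choose ((n - k) / 2)) else 0

lemma Jval_of_eq {k n i : ℕ} (h : n = k + 2 * i) :
    Jval k n = Real.pi / 2 ^ n * (n.choose i) := by
  have hi : (n - k) / 2 = i := by omega
  rw [Jval, if_pos ⟨by omega, by omega⟩, hi]

lemma Jval_of_ne {k n : ℕ} (h : ¬ ∃ i, n = k + 2 * i) : Jval k n = 0 := by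
  rw [Jval, if_neg]
  rintro ⟨h1, h2⟩
  exact h ⟨(n - k) / 2, by omega⟩

lemma Jval_step (k n : ℕ) :
    Jval (k + 1) (n + 1) = (Jval (k + 2) n + Jval k n) / 2 := by
  by_cases h : ∃ i, n + 1 = (k + 1) + 2 * i
  · obtain ⟨i, hi⟩ := h
    rcases i with _ | m
    · have hn : n = k := by omega
      subst hn
      rw [Jval_of_eq (show n + 1 = (n + 1) + 2 * 0 by omega),
        Jval_of_ne (by intro ⟨j, hj⟩; omega),
        Jval_of_eq (show n = n + 2 * 0 by omega)]
      simp [pow_succ]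
      ring
    · have h2 : n = (k + 2) + 2 * m := by omega
      rw [Jval_of_eq hi, Jval_of_eq h2, Jval_of_eq (show n = k + 2 * (m + 1) by omega)]
      have hp : (n + 1).choose (m + 1) = n.choose m + n.choose (m + 1) :=
        Nat.choose_succ_succ n m
      rw [hp]
      push_cast
      rw [pow_succ]
      ring
  · rw [Jval_of_ne h, Jval_of_ne (by intro ⟨j, hj⟩; exact h ⟨j + 1, by omega⟩),
      Jval_of_ne (by intro ⟨j, hj⟩; exact h ⟨j, by omega⟩)]
    norm_num

lemma Jval_zero_step (n : ℕ) : Jval 0 (n + 1) = Jval 1 n := by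
  by_cases h : ∃ i, n = 1 + 2 * i
  · obtain ⟨i, hi⟩ := h
    rw [Jval_of_eq hi, Jval_of_eq (show n + 1 = 0 + 2 * (i + 1) by omega)]
    have hsym : n.choose (i + 1) = n.choose i := by
      rw [← Nat.choose_symm (show i + 1 ≤ n by omega)]
      congr 1
      omega
    have hp : (n + 1).choose (i + 1) = n.choose i + n.choose (i + 1) :=
      Nat.choose_succ_succ n i
    rw [hp, hsym]
    push_cast
    rw [pow_succ]
    ring
  · rw [Jval_of_ne (by intro ⟨j, hj⟩; exact h ⟨j - 1, by omega⟩),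
      Jval_of_ne (by intro ⟨j, hj⟩; exact h ⟨j, by omega⟩)]

lemma integral_cos_nat (k : ℕ) :
    ∫ θ in (0:ℝ)..Real.pi, Real.cos (k * θ) = if k = 0 then Real.pi else 0 := by
  rcases Nat.eq_zero_or_pos k with hk | hk
  · subst hk; simp
  · rw [if_neg hk.ne']
    have hc : (k : ℝ) ≠ 0 := Nat.cast_ne_zero.mpr hk.ne'
    rw [intervalIntegral.integral_comp_mul_left Real.cos hc]
    simp [Real.sin_nat_mul_pi]

lemma cosInt (n : ℕ) : ∀ k : ℕ,
    ∫ θ in (0:ℝ)..Real.pi, Real.cos (k * θ) * Real.cos θ ^ n = Jval k n := by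
  induction n with
  | zero =>
    intro k
    simp only [pow_zero, mul_one]
    rw [integral_cos_nat]
    rcases Nat.eq_zero_or_pos k with hk | hk
    · subst hk
      rw [Jval_of_eq (show 0 = 0 + 2 * 0 by omega)]
      simp
    · rw [if_neg hk.ne', Jval_of_ne (by intro ⟨j, hj⟩; omega)]
  | succ n ih =>
    intro k
    have hcont : ∀ (m j : ℕ), IntervalIntegrable
        (fun θ => Real.cos (j * θ) * Real.cos θ ^ m) MeasureTheory.volume 0 Real.pi := by
      intro m j
      apply Continuous.intervalIntegrable
      fun_prop
    rcases k with _ | j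
    · have hpt : ∀ θ : ℝ, Real.cos ((0:ℕ) * θ) * Real.cos θ ^ (n + 1)
          = Real.cos ((1:ℕ) * θ) * Real.cos θ ^ n := by
        intro θ
        simp only [Nat.cast_zero, Nat.cast_one, zero_mul, Real.cos_zero, one_mul, pow_succ]
        ring
      rw [intervalIntegral.integral_congr (fun θ _ => hpt θ), ih 1, Jval_zero_step]
    · have hpt : ∀ θ : ℝ, Real.cos (((j+1:ℕ):ℝ) * θ) * Real.cos θ ^ (n + 1)
          = (Real.cos (((j+2:ℕ):ℝ) * θ) * Real.cos θ ^ n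
            + Real.cos (((j:ℕ):ℝ) * θ) * Real.cos θ ^ n) / 2 := by
        intro θ
        have h2 : ((j+2:ℕ):ℝ) * θ = ((j+1:ℕ):ℝ) * θ + θ := by push_cast; ring
        have h0 : ((j:ℕ):ℝ) * θ = ((j+1:ℕ):ℝ) * θ - θ := by push_cast; ring
        rw [h2, h0, Real.cos_add, Real.cos_sub, pow_succ]
        ring
      rw [intervalIntegral.integral_congr (fun θ _ => hpt θ),
        intervalIntegral.integral_div,
        intervalIntegral.integral_add (hcont n (j+2)) (hcont n j),
        ih (j+2), ih j, Jval_step]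

lemma term_id (τ : ℝ) (hτ : 0 ≤ τ) (k i : ℕ) :
    (2 / Real.pi) * ((Real.exp (-τ) * (-τ) ^ (k + 2 * i) / (k + 2 * i).factorial) *
        (Real.pi / 2 ^ (k + 2 * i) * ((k + 2 * i).choose i))) =
      (-1) ^ k * (2 * (τ / 2) ^ k * Real.exp (-τ) / k.factorial) *
        ((τ / 2) ^ (2 * i) * (k.factorial : ℝ) / (i.factorial * (k + i).factorial)) := by
  have hfacn : (k + 2 * i).choose i * i.factorial * (k + i).factorial
      = (k + 2 * i).factorial := by
    have h := Nat.choose_mul_factorial_mul_factorial (show i ≤ k + 2 * i by omega)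
    rwa [show k + 2 * i - i = k + i by omega] at h
  have hC : (((k + 2 * i).choose i : ℕ) : ℝ)
      = (k + 2 * i).factorial / (i.factorial * (k + i).factorial) := by
    rw [eq_div_iff (by positivity), ← mul_assoc]
    exact_mod_cast hfacn
  have hneg : (-τ) ^ (k + 2 * i) = (-1) ^ k * τ ^ (k + 2 * i) := by
    rw [neg_pow, pow_add, pow_mul]
    norm_num
  rw [hC, hneg]
  have h2 : ((2:ℝ)) ^ (k + 2 * i) ≠ 0 := by positivity
  have hpi : Real.pi ≠ 0 := Real.pi_ne_zero
  have hf1 : ((k + 2 * i).factorial : ℝ) ≠ 0 := by positivity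
  have hf2 : (i.factorial : ℝ) ≠ 0 := by positivity
  have hf3 : ((k + i).factorial : ℝ) ≠ 0 := by positivity
  have hf4 : (k.factorial : ℝ) ≠ 0 := by positivity
  field_simp
  simp only [pow_add]
  have e1 : ((1:ℝ)/2)^k * 2^k = 1 := by rw [← mul_pow]; norm_num
  have e2 : ((1:ℝ)/2)^(2*i) * 2^(2*i) = 1 := by rw [← mul_pow]; norm_num
  linear_combination (-(τ^k*τ^(2*i)) * ((1:ℝ)/2)^(2*i) * 2^(2*i)) * e1 + (-(τ^k*τ^(2*i))) * e2

theorem stmt_5 (τ : ℝ) (hτ : 0 ≤ τ) (k : ℕ) :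
    chebCoeff τ k =
      (-1) ^ k * (2 * (τ / 2) ^ k * Real.exp (-τ) / k.factorial) *
        ∑' i : ℕ, (τ / 2) ^ (2 * i) * (k.factorial : ℝ) / (i.factorial * (k + i).factorial) := by
  classical
  set a : ℕ → ℝ := fun n => Real.exp (-τ) * (-τ) ^ n / n.factorial with ha
  set F : ℕ → ℝ → ℝ := fun n θ => Real.cos (k * θ) * (a n * Real.cos θ ^ n) with hFdef
  -- pointwise sum of the series
  have hptsum : ∀ θ : ℝ, HasSum (fun n => F n θ)
      (Real.cos (k * θ) * Real.exp (-τ * (Real.cos θ + 1))) := by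
    intro θ
    have hs : HasSum (fun n : ℕ => (-τ * Real.cos θ) ^ n / n.factorial)
        (Real.exp (-τ * Real.cos θ)) := by
      rw [Real.exp_eq_exp_ℝ]
      exact NormedSpace.expSeries_div_hasSum_exp (-τ * Real.cos θ)
    have h1 := hs.mul_left (Real.cos (k * θ) * Real.exp (-τ))
    have heq : (fun n : ℕ => Real.cos (k * θ) * Real.exp (-τ) *
        ((-τ * Real.cos θ) ^ n / n.factorial)) = fun n : ℕ => F n θ := by
      funext n
      rw [hFdef, ha]
      simp only [mul_pow]
      ring
    have hval : Real.cos (k * θ) * Real.exp (-τ) * Real.exp (-τ * Real.cos θ)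
        = Real.cos (k * θ) * Real.exp (-τ * (Real.cos θ + 1)) := by
      rw [show -τ * (Real.cos θ + 1) = -τ * Real.cos θ + -τ by ring, Real.exp_add]
      ring
    rw [heq, hval] at h1
    exact h1
  -- integrability
  have hInt : ∀ n : ℕ, IntegrableOn (F n) (Set.Ioc (0:ℝ) Real.pi) := by
    intro n
    exact (by fun_prop : Continuous (F n)).integrableOn_Ioc
  -- summability of integrals of norms
  have hNorm : Summable (fun n : ℕ => ∫ θ in Set.Ioc (0:ℝ) Real.pi, ‖F n θ‖) := by
    have hmaj : Summable (fun n : ℕ => Real.pi * Real.exp (-τ) * (τ ^ n / n.factorial)) :=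
      (Real.summable_pow_div_factorial τ).mul_left _
    refine Summable.of_nonneg_of_le (fun n => integral_nonneg fun θ => norm_nonneg _) ?_ hmaj
    intro n
    have habs : |a n| = Real.exp (-τ) * (τ ^ n / n.factorial) := by
      rw [ha]
      rw [abs_div, abs_mul, abs_pow, abs_neg, abs_of_nonneg hτ,
        abs_of_nonneg (Real.exp_pos _).le, Nat.abs_cast]
      ring
    have hb : ∀ θ : ℝ, ‖F n θ‖ ≤ Real.exp (-τ) * (τ ^ n / n.factorial) := by
      intro θ
      rw [hFdef]
      simp only []
      rw [Real.norm_eq_abs, abs_mul, abs_mul, abs_pow, ← habs]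
      calc |Real.cos (k * θ)| * (|a n| * |Real.cos θ| ^ n) ≤ 1 * (|a n| * 1) := by
            gcongr <;>
              first
                | exact Real.abs_cos_le_one _
                | exact pow_le_one₀ (abs_nonneg _) (Real.abs_cos_le_one _)
        _ = |a n| := by ring
    calc ∫ θ in Set.Ioc (0:ℝ) Real.pi, ‖F n θ‖
        ≤ ∫ _ in Set.Ioc (0:ℝ) Real.pi, Real.exp (-τ) * (τ ^ n / n.factorial) := by
          apply setIntegral_mono_on
          · exact (hInt n).norm
          · exact integrableOn_const measure_Ioc_lt_top.ne
          · exact measurableSet_Ioc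
          · exact fun θ _ => hb θ
      _ = Real.pi * Real.exp (-τ) * (τ ^ n / n.factorial) := by
          rw [setIntegral_const, Real.volume_real_Ioc_of_le Real.pi_pos.le, smul_eq_mul, sub_zero]
          ring
  -- swap integral and sum
  have hswap := MeasureTheory.integral_tsum_of_summable_integral_norm hInt hNorm
  have hgt : ∀ θ : ℝ, (∑' n, F n θ)
      = Real.cos (k * θ) * Real.exp (-τ * (Real.cos θ + 1)) :=
    fun θ => (hptsum θ).tsum_eq
  have hint2 : (∫ θ in Set.Ioc (0:ℝ) Real.pi,
        Real.cos (k * θ) * Real.exp (-τ * (Real.cos θ + 1)))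
      = ∑' n, ∫ θ in Set.Ioc (0:ℝ) Real.pi, F n θ := by
    rw [hswap]
    exact integral_congr_ae (Filter.Eventually.of_forall fun θ => (hgt θ).symm)
  -- each term
  have hterm : ∀ n : ℕ, (∫ θ in Set.Ioc (0:ℝ) Real.pi, F n θ) = a n * Jval k n := by
    intro n
    rw [← intervalIntegral.integral_of_le Real.pi_pos.le]
    have hc : ∀ θ : ℝ, F n θ = a n * (Real.cos (k * θ) * Real.cos θ ^ n) := by
      intro θ
      rw [hFdef]
      ring
    rw [intervalIntegral.integral_congr (fun θ _ => hc θ),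
      intervalIntegral.integral_const_mul, cosInt]
  rw [chebCoeff, intervalIntegral.integral_of_le Real.pi_pos.le, hint2]
  have hterm' : (fun n : ℕ => ∫ θ in Set.Ioc (0:ℝ) Real.pi, F n θ)
      = fun n => a n * Jval k n := funext hterm
  rw [hterm']
  -- reindex the sum over n = k + 2 i
  have hinj : Function.Injective (fun i : ℕ => k + 2 * i) := by
    intro x y h
    simp only [] at h
    omega
  have hsupp : Function.support (fun n => a n * Jval k n)
      ⊆ Set.range (fun i : ℕ => k + 2 * i) := by
    intro n hn
    by_contra hc
    apply hn
    show a n * Jval k n = 0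
    rw [Jval_of_ne (by rintro ⟨i, hi⟩; exact hc ⟨i, hi.symm⟩), mul_zero]
  have hre := hinj.tsum_eq hsupp
  rw [← hre, ← tsum_mul_left, ← tsum_mul_left]
  apply tsum_congr
  intro i
  show (2 / Real.pi) * (a (k + 2 * i) * Jval k (k + 2 * i)) = _
  rw [Jval_of_eq (rfl : k + 2 * i = k + 2 * i)]
  exact term_id τ hτ k i
end

section
/- Let τ ≥ 0, C = τ/2, and let K be a natural number with K > C − 1. Define the Chebyshev coefficients c_k(τ) = (2/π)∫₀^π cos(kθ) exp(−τ(cos θ + 1)) dθ. Then the tail sum Σ_{k=K+1}^∞ |c_k(τ)| is at most 2 exp(C²/(K+2) − 2C) · C^(K+1) / (K! (K+1−C)). -/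
namespace StmtAux9

open Real MeasureTheory Finset

lemma integral_cos_int (m : ℤ) :
    (∫ θ in (0:ℝ)..Real.pi, Real.cos ((m : ℝ) * θ)) = if m = 0 then Real.pi else 0 := by
  rcases eq_or_ne m 0 with h | h
  · simp [h]
  · have hm' : (m : ℝ) ≠ 0 := Int.cast_ne_zero.mpr h
    rw [if_neg h, intervalIntegral.integral_comp_mul_left (fun x => Real.cos x) hm']
    simp [integral_cos, Real.sin_int_mul_pi]

lemma orth (k : ℕ) (hk : 1 ≤ k) (m : ℤ) :
    (∫ θ in (0:ℝ)..Real.pi, Real.cos ((k : ℝ) * θ) * Real.cos ((m : ℝ) * θ))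
      = if m = k ∨ m = -k then Real.pi / 2 else 0 := by
  have h1 : ∀ θ : ℝ, Real.cos ((k : ℝ) * θ) * Real.cos ((m : ℝ) * θ)
      = (Real.cos ((((k : ℤ) - m : ℤ) : ℝ) * θ) + Real.cos ((((k : ℤ) + m : ℤ) : ℝ) * θ)) / 2 := by
    intro θ
    have e1 : (((k : ℤ) - m : ℤ) : ℝ) * θ = (k : ℝ) * θ - (m : ℝ) * θ := by push_cast; ring
    have e2 : (((k : ℤ) + m : ℤ) : ℝ) * θ = (k : ℝ) * θ + (m : ℝ) * θ := by push_cast; ring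
    rw [e1, e2]
    have := Real.two_mul_cos_mul_cos ((k : ℝ) * θ) ((m : ℝ) * θ)
    linarith
  simp_rw [h1]
  have c1 : Continuous fun θ : ℝ => Real.cos ((((k : ℤ) - m : ℤ) : ℝ) * θ) := by fun_prop
  have c2 : Continuous fun θ : ℝ => Real.cos ((((k : ℤ) + m : ℤ) : ℝ) * θ) := by fun_prop
  rw [intervalIntegral.integral_div, intervalIntegral.integral_add
    (c1.intervalIntegrable _ _) (c2.intervalIntegrable _ _),
    integral_cos_int ((k : ℤ) - m), integral_cos_int ((k : ℤ) + m)]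
  have hk' : (1 : ℤ) ≤ (k : ℤ) := by exact_mod_cast hk
  by_cases h : m = (k : ℤ)
  · rw [if_pos (Or.inl h)]
    rw [if_pos (by omega), if_neg (by omega)]
    ring
  · by_cases h' : m = -(k : ℤ)
    · rw [if_pos (Or.inr h')]
      rw [if_neg (by omega), if_pos (by omega)]
      ring
    · rw [if_neg (by omega), if_neg (by omega), if_neg (by tauto)]
      ring

lemma cos_pow_eq (θ : ℝ) (n : ℕ) :
    Real.cos θ ^ n = ∑ j ∈ Finset.range (n + 1),
      ((n.choose j : ℝ) / 2 ^ n) * Real.cos ((((n : ℤ) - 2 * j : ℤ) : ℝ) * θ) := by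
  have key : ((Real.cos θ : ℂ)) ^ n
      = ∑ j ∈ Finset.range (n + 1), ((n.choose j : ℂ) / 2 ^ n) *
          Complex.exp (((((n : ℤ) - 2 * j : ℤ) : ℝ) * θ : ℝ) * Complex.I) := by
    rw [Complex.ofReal_cos]
    have hc : Complex.cos θ = (Complex.exp (-(θ : ℂ) * Complex.I)
        + Complex.exp ((θ : ℂ) * Complex.I)) / 2 := by
      rw [Complex.cos]; ring
    rw [hc, div_pow, add_pow]
    rw [Finset.sum_div]
    refine Finset.sum_congr rfl fun j hj => ?_
    have hj' : j ≤ n := by simpa [Nat.lt_succ_iff] using hj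
    have e1 : Complex.exp (-(θ : ℂ) * Complex.I) ^ j = Complex.exp ((j : ℂ) * (-(θ : ℂ) * Complex.I)) := by
      rw [← Complex.exp_nat_mul]
    have e2 : Complex.exp ((θ : ℂ) * Complex.I) ^ (n - j)
        = Complex.exp (((n - j : ℕ) : ℂ) * ((θ : ℂ) * Complex.I)) := by
      rw [← Complex.exp_nat_mul]
    rw [e1, e2, ← Complex.exp_add]
    have e3 : (j : ℂ) * (-(θ : ℂ) * Complex.I) + ((n - j : ℕ) : ℂ) * ((θ : ℂ) * Complex.I)
        = ((((n : ℤ) - 2 * j : ℤ) : ℝ) * θ : ℝ) * Complex.I := by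
      push_cast [hj']
      ring
    rw [e3]
    ring
  calc Real.cos θ ^ n = (((Real.cos θ : ℂ)) ^ n).re := by
        rw [← Complex.ofReal_pow, Complex.ofReal_re]
    _ = _ := by
        rw [key, Complex.re_sum]
        refine Finset.sum_congr rfl fun j hj => ?_
        have hco : ((n.choose j : ℂ) / 2 ^ n) = (((n.choose j : ℝ) / 2 ^ n : ℝ) : ℂ) := by
          push_cast; rfl
        rw [hco, Complex.re_ofReal_mul, Complex.exp_ofReal_mul_I_re]

noncomputable def J (k n : ℕ) : ℝ :=
  ∫ θ in (0:ℝ)..Real.pi, Real.cos ((k : ℝ) * θ) * Real.cos θ ^ n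

lemma J_eq (k : ℕ) (hk : 1 ≤ k) (n : ℕ) :
    J k n = ∑ j ∈ Finset.range (n + 1), ((n.choose j : ℝ) / 2 ^ n) *
      (if ((n : ℤ) - 2 * j = k ∨ (n : ℤ) - 2 * j = -k) then Real.pi / 2 else 0) := by
  unfold J
  have h1 : ∀ θ : ℝ, Real.cos ((k : ℝ) * θ) * Real.cos θ ^ n
      = ∑ j ∈ Finset.range (n + 1), ((n.choose j : ℝ) / 2 ^ n) *
          (Real.cos ((k : ℝ) * θ) * Real.cos ((((n : ℤ) - 2 * j : ℤ) : ℝ) * θ)) := by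
    intro θ
    rw [cos_pow_eq θ n, Finset.mul_sum]
    exact Finset.sum_congr rfl fun j _ => by ring
  simp_rw [h1]
  rw [intervalIntegral.integral_finset_sum]
  · exact Finset.sum_congr rfl fun j _ => by
      rw [intervalIntegral.integral_const_mul, orth k hk ((n : ℤ) - 2 * j)]
  · intro j _
    exact (by fun_prop : Continuous fun θ : ℝ => ((n.choose j : ℝ) / 2 ^ n) *
      (Real.cos ((k : ℝ) * θ) * Real.cos ((((n : ℤ) - 2 * j : ℤ) : ℝ) * θ))).intervalIntegrable _ _

lemma J_eq_of (k m : ℕ) (hk : 1 ≤ k) :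
    J k (k + 2 * m) = Real.pi * ((k + 2 * m).choose m : ℝ) / 2 ^ (k + 2 * m) := by
  set n := k + 2 * m with hn
  rw [J_eq k hk n]
  have hsum : ∀ j ∈ Finset.range (n + 1),
      ((n.choose j : ℝ) / 2 ^ n) *
        (if ((n : ℤ) - 2 * j = k ∨ (n : ℤ) - 2 * j = -k) then Real.pi / 2 else 0)
      = (if j = m then ((n.choose m : ℝ) / 2 ^ n) * (Real.pi / 2) else 0)
        + (if j = m + k then ((n.choose (m + k) : ℝ) / 2 ^ n) * (Real.pi / 2) else 0) := by
    intro j hj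
    by_cases h1 : j = m
    · subst h1
      rw [if_pos (by omega), if_pos rfl, if_neg (by omega)]
      ring
    · by_cases h2 : j = m + k
      · subst h2
        rw [if_pos (by omega), if_neg (by omega), if_pos rfl]
        ring
      · rw [if_neg (by omega), if_neg h1, if_neg h2]
        ring
  rw [Finset.sum_congr rfl hsum, Finset.sum_add_distrib,
    Finset.sum_ite_eq' _ m, Finset.sum_ite_eq' _ (m + k),
    if_pos (by simp [hn]; omega), if_pos (by simp [hn]; omega)]
  have hch : (n.choose (m + k) : ℝ) = (n.choose m : ℝ) := by
    have h1 : m + k ≤ n := by omega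
    have := Nat.choose_symm h1
    have h2 : n - (m + k) = m := by omega
    rw [h2] at this
    exact_mod_cast congrArg (Nat.cast (R := ℝ)) this.symm
  rw [hch]
  ring
lemma J_eq_zero (k n : ℕ) (hk : 1 ≤ k) (h : ∀ m, n ≠ k + 2 * m) : J k n = 0 := by
  rw [J_eq k hk n]
  refine Finset.sum_eq_zero fun j hj => ?_
  have hj' : j ≤ n := by simpa [Nat.lt_succ_iff] using hj
  rw [if_neg, mul_zero]
  rintro (h1 | h2)
  · exact h j (by omega)
  · exact h (j - k) (by omega)

lemma exp_hasSum (x : ℝ) : HasSum (fun n : ℕ => x ^ n / n.factorial) (Real.exp x) := by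
  rw [Real.exp_eq_exp_ℝ, NormedSpace.exp_eq_tsum_div]
  exact (Real.summable_pow_div_factorial x).hasSum

lemma J_abs_le (k n : ℕ) : |J k n| ≤ Real.pi := by
  have h := intervalIntegral.norm_integral_le_of_norm_le_const
    (a := (0:ℝ)) (b := Real.pi) (C := 1)
    (f := fun θ => Real.cos ((k : ℝ) * θ) * Real.cos θ ^ n) ?_
  · calc |J k n| ≤ 1 * |Real.pi - 0| := h
      _ = Real.pi := by rw [one_mul, sub_zero, abs_of_pos Real.pi_pos]
  · intro x _
    rw [Real.norm_eq_abs, abs_mul, abs_pow]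
    calc |Real.cos ((k:ℝ)*x)| * |Real.cos x| ^ n ≤ 1 * 1 ^ n := by
          gcongr
          · exact Real.abs_cos_le_one _
          · exact Real.abs_cos_le_one _
      _ = 1 := by ring

lemma chebCoeff_eq (τ : ℝ) (hτ : 0 ≤ τ) (k : ℕ) :
    chebCoeff τ k = (2 / Real.pi) * Real.exp (-τ) *
      ∑' n : ℕ, ((-τ) ^ n / n.factorial) * J k n := by
  have hint : (∫ θ in (0:ℝ)..Real.pi, Real.cos ((k:ℝ) * θ) * Real.exp (-τ * (Real.cos θ + 1)))
      = Real.exp (-τ) * ∫ θ in (0:ℝ)..Real.pi, Real.cos ((k:ℝ) * θ) * Real.exp (-τ * Real.cos θ) := by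
    rw [← intervalIntegral.integral_const_mul]
    refine intervalIntegral.integral_congr fun θ _ => ?_
    rw [show -τ * (Real.cos θ + 1) = -τ * Real.cos θ + -τ by ring, Real.exp_add]
    ring
  set F : ℕ → ℝ → ℝ := fun n θ => Real.cos ((k:ℝ) * θ) * ((-τ * Real.cos θ) ^ n / n.factorial)
    with hF
  have hFcont : ∀ n, Continuous (F n) := by intro n; fun_prop
  have hμ : (volume (Set.Ioc (0:ℝ) Real.pi)).toReal = Real.pi := by
    rw [Real.volume_Ioc]
    simp [Real.pi_pos.le]
  have hnorm : ∀ n, (∫ θ in Set.Ioc (0:ℝ) Real.pi, ‖F n θ‖) ≤ Real.pi * (τ ^ n / n.factorial) := by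
    intro n
    have hb : ∀ θ ∈ Set.Ioc (0:ℝ) Real.pi, ‖F n θ‖ ≤ τ ^ n / n.factorial := by
      intro θ _
      rw [Real.norm_eq_abs, hF]
      simp only
      rw [abs_mul, abs_div, abs_pow, abs_mul, Nat.abs_cast]
      calc |Real.cos ((k:ℝ)*θ)| * ((|(-τ)| * |Real.cos θ|) ^ n / n.factorial)
          ≤ 1 * ((τ * 1) ^ n / n.factorial) := by
            gcongr
            · exact Real.abs_cos_le_one _
            · rw [abs_neg, abs_of_nonneg hτ]
            · exact Real.abs_cos_le_one _
        _ = τ ^ n / n.factorial := by ring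
    calc (∫ θ in Set.Ioc (0:ℝ) Real.pi, ‖F n θ‖)
        ≤ ∫ _ in Set.Ioc (0:ℝ) Real.pi, (τ ^ n / n.factorial : ℝ) := by
          refine setIntegral_mono_on ((hFcont n).norm.integrableOn_Ioc) (integrableOn_const ?_)
            measurableSet_Ioc hb
          rw [Real.volume_Ioc]
          exact ENNReal.ofReal_ne_top
      _ = Real.pi * (τ ^ n / n.factorial) := by
          rw [setIntegral_const, smul_eq_mul, measureReal_def, hμ]
  have hsum : Summable fun n => ∫ θ in Set.Ioc (0:ℝ) Real.pi, ‖F n θ‖ :=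
    Summable.of_nonneg_of_le (fun n => integral_nonneg fun θ => norm_nonneg _) hnorm
      (((Real.summable_pow_div_factorial τ)).mul_left Real.pi)
  have hswap := MeasureTheory.integral_tsum_of_summable_integral_norm
    (μ := volume.restrict (Set.Ioc (0:ℝ) Real.pi)) (F := F)
    (fun n => (hFcont n).integrableOn_Ioc) hsum
  have hptsum : ∀ θ : ℝ, (∑' n, F n θ) = Real.cos ((k:ℝ) * θ) * Real.exp (-τ * Real.cos θ) := by
    intro θ
    rw [hF]
    simp only
    rw [tsum_mul_left, (exp_hasSum (-τ * Real.cos θ)).tsum_eq]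
  have hFn : ∀ n, (∫ θ in Set.Ioc (0:ℝ) Real.pi, F n θ) = ((-τ) ^ n / n.factorial) * J k n := by
    intro n
    rw [← intervalIntegral.integral_of_le Real.pi_pos.le, J,
      ← intervalIntegral.integral_const_mul]
    refine intervalIntegral.integral_congr fun θ _ => ?_
    rw [hF]
    simp only
    rw [mul_pow]
    ring
  have : (∫ θ in (0:ℝ)..Real.pi, Real.cos ((k:ℝ) * θ) * Real.exp (-τ * Real.cos θ))
      = ∑' n : ℕ, ((-τ) ^ n / n.factorial) * J k n := by
    rw [intervalIntegral.integral_of_le Real.pi_pos.le]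
    rw [show (fun x : ℝ => Real.cos ((k:ℝ) * x) * Real.exp (-τ * Real.cos x))
        = fun x : ℝ => ∑' n, F n x from funext fun θ => (hptsum θ).symm, ← hswap]
    exact tsum_congr hFn
  rw [chebCoeff, hint, this]
  ring

lemma chebCoeff_abs_le (τ : ℝ) (hτ : 0 ≤ τ) (k : ℕ) (hk : 1 ≤ k) :
    |chebCoeff τ k| ≤ 2 * Real.exp (-τ) * ((τ / 2) ^ k / k.factorial) *
      Real.exp ((τ / 2) ^ 2 / (k + 1)) := by
  set f : ℕ → ℝ := fun n => ((-τ) ^ n / n.factorial) * J k n with hf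
  have habs : ∀ n, |f n| = (τ ^ n / n.factorial) * |J k n| := by
    intro n
    rw [hf]
    simp only
    rw [abs_mul, abs_div, abs_pow, abs_neg, abs_of_nonneg hτ, Nat.abs_cast]
  have hble : ∀ n, (τ ^ n / n.factorial) * |J k n| ≤ (τ ^ n / n.factorial) * Real.pi := by
    intro n
    have h1 : (0:ℝ) ≤ τ ^ n / n.factorial := by positivity
    exact mul_le_mul_of_nonneg_left (J_abs_le k n) h1
  have hsum_abs : Summable fun n => |f n| := by
    rw [funext habs]
    exact Summable.of_nonneg_of_le (fun n => by positivity) hble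
      ((Real.summable_pow_div_factorial τ).mul_right Real.pi)
  -- reindexing
  have hg : Function.Injective (fun m : ℕ => k + 2 * m) := fun a b h => by
    simp only at h; omega
  have hsupp : Function.support (fun n => (τ ^ n / n.factorial) * |J k n|)
      ⊆ Set.range (fun m : ℕ => k + 2 * m) := by
    intro n hn
    by_contra hcon
    have : ∀ m, n ≠ k + 2 * m := by
      intro m hm
      exact hcon ⟨m, hm.symm⟩
    rw [Function.mem_support] at hn
    exact hn (by rw [J_eq_zero k n hk this, abs_zero, mul_zero])
  have hre : (∑' m : ℕ, (τ ^ (k + 2 * m) / (k + 2 * m).factorial) * |J k (k + 2 * m)|)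
      = ∑' n, (τ ^ n / n.factorial) * |J k n| :=
    Function.Injective.tsum_eq hg hsupp
  -- term value and bound
  have hterm : ∀ m : ℕ, (τ ^ (k + 2 * m) / (k + 2 * m).factorial) * |J k (k + 2 * m)|
      = Real.pi * ((τ / 2) ^ (k + 2 * m) / (m.factorial * (k + m).factorial)) := by
    intro m
    have hJ : J k (k + 2 * m) = Real.pi * ((k + 2 * m).choose m : ℝ) / 2 ^ (k + 2 * m) :=
      J_eq_of k m hk
    have hJnn : (0:ℝ) ≤ J k (k + 2 * m) := by rw [hJ]; positivity
    rw [abs_of_nonneg hJnn, hJ]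
    have hc : ((k + 2 * m).choose m : ℝ)
        = ((k + 2 * m).factorial : ℝ) / (m.factorial * (k + m).factorial) := by
      rw [Nat.cast_choose ℝ (by omega : m ≤ k + 2 * m),
        (by omega : k + 2 * m - m = k + m)]
    rw [hc]
    have h1 : ((k + 2 * m).factorial : ℝ) ≠ 0 := by positivity
    have h2 : (m.factorial : ℝ) ≠ 0 := by positivity
    have h3 : ((k + m).factorial : ℝ) ≠ 0 := by positivity
    rw [div_pow]
    field_simp
  have hbound : ∀ m : ℕ, Real.pi * ((τ / 2) ^ (k + 2 * m) / (m.factorial * (k + m).factorial))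
      ≤ (Real.pi * ((τ / 2) ^ k / k.factorial)) * (((τ / 2) ^ 2 / (k + 1)) ^ m / m.factorial) := by
    intro m
    have key : (k.factorial : ℝ) * ((k : ℝ) + 1) ^ m ≤ ((k + m).factorial : ℝ) := by
      exact_mod_cast Nat.factorial_mul_pow_le_factorial (m := k) (n := m)
    have hN : (0:ℝ) ≤ Real.pi * (τ / 2) ^ (k + 2 * m) := by positivity
    have hrhs : (Real.pi * ((τ / 2) ^ k / k.factorial)) * (((τ / 2) ^ 2 / (k + 1)) ^ m / m.factorial)
        = Real.pi * (τ / 2) ^ (k + 2 * m) /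
            ((m.factorial : ℝ) * (k.factorial * ((k : ℝ) + 1) ^ m)) := by
      have hb : ((k:ℝ) + 1) ^ m ≠ 0 := by positivity
      have hF1 : (k.factorial : ℝ) ≠ 0 := by positivity
      have hF2 : (m.factorial : ℝ) ≠ 0 := by positivity
      obtain ⟨a, ha⟩ : ∃ a, τ / 2 = a := ⟨_, rfl⟩
      rw [ha]
      field_simp
      ring_nf
      rw [inv_pow, inv_mul_cancel_right₀ (by positivity)]
    rw [hrhs, mul_div_assoc']
    gcongr
    all_goals exact key
  have hsum_rhs : Summable fun m : ℕ =>
      (Real.pi * ((τ / 2) ^ k / k.factorial)) * (((τ / 2) ^ 2 / (k + 1)) ^ m / m.factorial) :=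
    (Real.summable_pow_div_factorial _).mul_left _
  have hsum_lhs : Summable fun m : ℕ =>
      Real.pi * ((τ / 2) ^ (k + 2 * m) / (m.factorial * (k + m).factorial)) :=
    Summable.of_nonneg_of_le (fun m => by positivity) hbound hsum_rhs
  have htsum_rhs : (∑' m : ℕ,
      (Real.pi * ((τ / 2) ^ k / k.factorial)) * (((τ / 2) ^ 2 / (k + 1)) ^ m / m.factorial))
      = (Real.pi * ((τ / 2) ^ k / k.factorial)) * Real.exp ((τ / 2) ^ 2 / (k + 1)) := by
    rw [tsum_mul_left, (exp_hasSum _).tsum_eq]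
  -- assemble
  have hS : (∑' n, |f n|) ≤ Real.pi * ((τ / 2) ^ k / k.factorial) *
      Real.exp ((τ / 2) ^ 2 / (k + 1)) := by
    rw [funext habs, ← hre]
    calc (∑' m : ℕ, (τ ^ (k + 2 * m) / (k + 2 * m).factorial) * |J k (k + 2 * m)|)
        = ∑' m : ℕ, Real.pi * ((τ / 2) ^ (k + 2 * m) / (m.factorial * (k + m).factorial)) :=
          tsum_congr hterm
      _ ≤ ∑' m : ℕ, (Real.pi * ((τ / 2) ^ k / k.factorial)) *
            (((τ / 2) ^ 2 / (k + 1)) ^ m / m.factorial) :=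
          Summable.tsum_le_tsum hbound hsum_lhs hsum_rhs
      _ = _ := htsum_rhs
  have habs_tsum : |∑' n, f n| ≤ ∑' n, |f n| := by
    have h1 : Summable fun n => ‖f n‖ := by simpa [Real.norm_eq_abs] using hsum_abs
    simpa [Real.norm_eq_abs] using norm_tsum_le_tsum_norm h1
  rw [chebCoeff_eq τ hτ k]
  have hpi : (0:ℝ) < Real.pi := Real.pi_pos
  rw [abs_mul, abs_mul, abs_of_nonneg (by positivity : (0:ℝ) ≤ 2 / Real.pi),
    abs_of_nonneg (Real.exp_nonneg _)]
  calc 2 / Real.pi * Real.exp (-τ) * |∑' n, f n|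
      ≤ 2 / Real.pi * Real.exp (-τ) *
        (Real.pi * ((τ / 2) ^ k / k.factorial) * Real.exp ((τ / 2) ^ 2 / (k + 1))) := by
        gcongr
        exact le_trans habs_tsum hS
    _ = 2 * Real.exp (-τ) * ((τ / 2) ^ k / k.factorial) * Real.exp ((τ / 2) ^ 2 / (k + 1)) := by
        field_simp

end StmtAux9

open StmtAux9 Real in
theorem stmt_9 (τ : ℝ) (hτ : 0 ≤ τ) (K : ℕ) (hK : (K : ℝ) > τ / 2 - 1) :
    ∑' j : ℕ, |chebCoeff τ (K + 1 + j)| ≤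
      2 * Real.exp ((τ / 2) ^ 2 / ((K : ℝ) + 2) - 2 * (τ / 2)) *
        (τ / 2) ^ (K + 1) / (K.factorial * ((K : ℝ) + 1 - τ / 2)) := by
  set C : ℝ := τ / 2 with hC
  have hC0 : 0 ≤ C := by positivity
  have hCK : C < (K : ℝ) + 1 := by linarith
  set r : ℝ := C / ((K : ℝ) + 1) with hr
  have hr0 : 0 ≤ r := by positivity
  have hr1 : r < 1 := by
    rw [hr, div_lt_one (by positivity)]
    exact hCK
  set A : ℝ := 2 * Real.exp (-τ) * Real.exp (C ^ 2 / ((K : ℝ) + 2)) *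
    (C ^ (K + 1) / (K + 1).factorial) with hA
  have hA0 : 0 ≤ A := by positivity
  -- termwise bound
  have hterm : ∀ j : ℕ, |chebCoeff τ (K + 1 + j)| ≤ A * r ^ j := by
    intro j
    have h1 := chebCoeff_abs_le τ hτ (K + 1 + j) (by omega)
    have hexp : Real.exp (C ^ 2 / (((K + 1 + j : ℕ) : ℝ) + 1))
        ≤ Real.exp (C ^ 2 / ((K : ℝ) + 2)) := by
      apply Real.exp_le_exp.mpr
      refine div_le_div_of_nonneg_left (by positivity) (by positivity) ?_
      push_cast
      linarith [Nat.cast_nonneg (α := ℝ) j]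
    have hfact : ((K + 1).factorial : ℝ) * ((K : ℝ) + 1) ^ j
        ≤ ((K + 1 + j).factorial : ℝ) := by
      have h2 : ((K + 1).factorial : ℝ) * ((K : ℝ) + 2) ^ j
          ≤ ((K + 1 + j).factorial : ℝ) := by
        have := Nat.factorial_mul_pow_le_factorial (m := K + 1) (n := j)
        have hcast : (((K + 1).factorial * (K + 1 + 1) ^ j : ℕ) : ℝ)
            ≤ (((K + 1 + j).factorial : ℕ) : ℝ) := by exact_mod_cast this
        push_cast at hcast ⊢
        have he : (K:ℝ) + 1 + 1 = (K:ℝ) + 2 := by ring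
        rw [he] at hcast
        exact hcast
      calc ((K + 1).factorial : ℝ) * ((K : ℝ) + 1) ^ j
          ≤ ((K + 1).factorial : ℝ) * ((K : ℝ) + 2) ^ j := by gcongr <;> linarith
        _ ≤ _ := h2
    have hpow : C ^ (K + 1 + j) / ((K + 1 + j).factorial : ℝ)
        ≤ (C ^ (K + 1) / ((K + 1).factorial : ℝ)) * r ^ j := by
      have hd : (0:ℝ) < ((K + 1).factorial : ℝ) * ((K : ℝ) + 1) ^ j := by positivity
      calc C ^ (K + 1 + j) / ((K + 1 + j).factorial : ℝ)
          ≤ C ^ (K + 1 + j) / (((K + 1).factorial : ℝ) * ((K : ℝ) + 1) ^ j) := by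
            exact div_le_div_of_nonneg_left (by positivity) hd hfact
        _ = (C ^ (K + 1) / ((K + 1).factorial : ℝ)) * r ^ j := by
            rw [hr, div_pow C ((K:ℝ)+1) j, pow_add, div_mul_div_comm]
    calc |chebCoeff τ (K + 1 + j)|
        ≤ 2 * Real.exp (-τ) * (C ^ (K + 1 + j) / ((K + 1 + j).factorial : ℝ)) *
            Real.exp (C ^ 2 / (((K + 1 + j : ℕ) : ℝ) + 1)) := h1
      _ ≤ 2 * Real.exp (-τ) * ((C ^ (K + 1) / ((K + 1).factorial : ℝ)) * r ^ j) *
            Real.exp (C ^ 2 / ((K : ℝ) + 2)) := by gcongr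
      _ = A * r ^ j := by rw [hA]; ring
  have hgeom : Summable fun j : ℕ => A * r ^ j :=
    (summable_geometric_of_lt_one hr0 hr1).mul_left A
  have hsumL : Summable fun j : ℕ => |chebCoeff τ (K + 1 + j)| :=
    Summable.of_nonneg_of_le (fun j => abs_nonneg _) hterm hgeom
  have hle := Summable.tsum_le_tsum hterm hsumL hgeom
  rw [tsum_mul_left, tsum_geometric_of_lt_one hr0 hr1] at hle
  refine hle.trans (le_of_eq ?_)
  have hKC : (0:ℝ) < (K : ℝ) + 1 - C := by linarith
  have h1r : (1 - r)⁻¹ = ((K : ℝ) + 1) / ((K : ℝ) + 1 - C) := by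
    rw [hr]
    rw [show 1 - C / ((K : ℝ) + 1) = ((K : ℝ) + 1 - C) / ((K : ℝ) + 1) by
      field_simp]
    rw [inv_div]
  have hfs : ((K + 1).factorial : ℝ) = ((K : ℝ) + 1) * (K.factorial : ℝ) := by
    rw [Nat.factorial_succ]; push_cast; ring
  have hee : Real.exp (-τ) * Real.exp (C ^ 2 / ((K : ℝ) + 2))
      = Real.exp (C ^ 2 / ((K : ℝ) + 2) - 2 * C) := by
    rw [← Real.exp_add]
    congr 1
    rw [hC]
    ring
  rw [hA, h1r, hfs]
  have hKf : (K.factorial : ℝ) ≠ 0 := by positivity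
  have hK1 : ((K : ℝ) + 1) ≠ 0 := by positivity
  have hKC' : ((K : ℝ) + 1 - C) ≠ 0 := ne_of_gt hKC
  rw [← hee]
  field_simp
end

section
/- Let L be a real symmetric PSD n×n matrix with largest eigenvalue 2, τ ≥ 0, C = τ/2, and K > C − 1 a natural number. Let p_K be the degree-K Chebyshev truncation of λ ↦ exp(−τλ) on [0,2], and g(K,τ) = 2 exp(C²/(K+2) − 2C) C^(K+1)/(K!(K+1−C)). Then for every nonzero x ∈ ℝⁿ, ‖exp(−τL)x − p_K(L)x‖₂² / ‖exp(−τL)x‖₂² ≤ g(K,τ)² · exp(4τ). -/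
open Matrix

/-- Degree-`K` Chebyshev truncation of `λ ↦ exp (-τ λ)` on `[0,2]`, as a polynomial. -/
noncomputable def chebTruncPoly (τ : ℝ) (K : ℕ) : Polynomial ℝ :=
  Polynomial.C (chebCoeff τ 0 / 2) +
    ∑ k ∈ Finset.Icc 1 K,
      Polynomial.C (chebCoeff τ k) * (Polynomial.Chebyshev.T ℝ k).comp (Polynomial.X - 1)

/-- The error bound `g(K, τ)`. -/
noncomputable def gBound (K : ℕ) (τ : ℝ) : ℝ :=
  2 * Real.exp ((τ / 2) ^ 2 / ((K : ℝ) + 2) - 2 * (τ / 2)) *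
    (τ / 2) ^ (K + 1) / (K.factorial * ((K : ℝ) + 1 - τ / 2))


noncomputable def Ibes (τ : ℝ) (k : ℕ) : ℝ :=
  ∑' m : ℕ, (τ/2)^(2*m+k) / (m.factorial * (m+k).factorial)

lemma fact_bound (k m : ℕ) : k.factorial * (k+1)^m ≤ (m+k).factorial := by
  induction m with
  | zero => simp
  | succ m ih =>
    have h2 : (m+k).factorial * (k+1) ≤ (m+k).factorial * (m+k+1) := by
      apply Nat.mul_le_mul_left; omega
    calc k.factorial * (k+1)^(m+1) = k.factorial * (k+1)^m * (k+1) := by ring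
    _ ≤ (m+k).factorial * (k+1) := Nat.mul_le_mul_right _ ih
    _ ≤ (m+k).factorial * (m+k+1) := h2
    _ = (m+1+k).factorial := by
        rw [show m+1+k = (m+k)+1 by omega, Nat.factorial_succ]; ring

lemma summand_nonneg {τ : ℝ} (hτ : 0 ≤ τ) (k m : ℕ) :
    0 ≤ (τ/2)^(2*m+k) / (m.factorial * (m+k).factorial) := by positivity

lemma summand_le {τ : ℝ} (hτ : 0 ≤ τ) (k m : ℕ) :
    (τ/2)^(2*m+k) / (m.factorial * (m+k).factorial) ≤
      (τ/2)^k / k.factorial * (((τ/2)^2/(k+1))^m / m.factorial) := by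
  have h1 : ((τ/2)^2/((k:ℝ)+1))^m = (τ/2)^(2*m) / ((k:ℝ)+1)^m := by
    rw [div_pow, ← pow_mul]
  rw [h1, div_div, div_mul_div_comm, ← pow_add]
  rw [show k + 2*m = 2*m + k by ring]
  apply div_le_div_of_nonneg_left (by positivity) (by positivity)
  calc (k.factorial : ℝ) * (((k:ℝ)+1)^m * m.factorial)
      = (k.factorial * ((k:ℝ)+1)^m) * m.factorial := by ring
    _ ≤ ((m+k).factorial : ℝ) * m.factorial := by
        apply mul_le_mul_of_nonneg_right _ (by positivity)
        exact_mod_cast fact_bound k m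
    _ = (m.factorial : ℝ) * (m+k).factorial := by ring

lemma summable_bound (τ : ℝ) (k : ℕ) :
    Summable (fun m : ℕ => (τ/2)^k / k.factorial * (((τ/2)^2/(k+1))^m / m.factorial)) :=
  (Real.summable_pow_div_factorial _).mul_left _

lemma summable_Ibes {τ : ℝ} (hτ : 0 ≤ τ) (k : ℕ) :
    Summable (fun m : ℕ => (τ/2)^(2*m+k) / (m.factorial * (m+k).factorial)) :=
  Summable.of_nonneg_of_le (summand_nonneg hτ k) (summand_le hτ k) (summable_bound τ k)

lemma hasSum_Ibes {τ : ℝ} (hτ : 0 ≤ τ) (k : ℕ) :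
    HasSum (fun m : ℕ => (τ/2)^(2*m+k) / (m.factorial * (m+k).factorial)) (Ibes τ k) :=
  (summable_Ibes hτ k).hasSum

lemma Ibes_nonneg {τ : ℝ} (hτ : 0 ≤ τ) (k : ℕ) : 0 ≤ Ibes τ k :=
  tsum_nonneg (summand_nonneg hτ k)

lemma hasSum_exp_real (x : ℝ) : HasSum (fun m : ℕ => x^m / m.factorial) (Real.exp x) := by
  rw [Real.exp_eq_exp_ℝ]
  exact NormedSpace.expSeries_div_hasSum_exp x

lemma Ibes_le {τ : ℝ} (hτ : 0 ≤ τ) (k : ℕ) :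
    Ibes τ k ≤ (τ/2)^k / k.factorial * Real.exp ((τ/2)^2 / (k+1)) := by
  have hexp := (hasSum_exp_real ((τ/2)^2 / ((k:ℝ)+1))).mul_left ((τ/2)^k / k.factorial)
  rw [← hexp.tsum_eq]
  exact Summable.tsum_le_tsum (summand_le hτ k) (summable_Ibes hτ k) hexp.summable



lemma zpow_helper (θ : ℝ) (p q : ℕ) :
    Complex.exp (θ*Complex.I)^p * Complex.exp ((-θ:ℝ)*Complex.I)^q
      = Complex.exp (((p:ℂ) - (q:ℂ))*(θ:ℂ)*Complex.I) := by
  rw [← Complex.exp_nat_mul, ← Complex.exp_nat_mul, ← Complex.exp_add]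
  push_cast
  ring_nf

lemma term_eq (c θ : ℝ) (a b : ℕ) :
    (-(c:ℂ) * Complex.exp (θ*Complex.I))^a / a.factorial *
      ((-(c:ℂ) * Complex.exp ((-θ:ℝ)*Complex.I))^b / b.factorial)
      = (((-1)^(a+b) * (c^(a+b) / (a.factorial * b.factorial)) : ℝ) : ℂ) *
        Complex.exp (((a:ℂ)-(b:ℂ))*(θ:ℂ)*Complex.I) := by
  rw [mul_pow, mul_pow, div_mul_div_comm]
  rw [show ((-(c:ℂ))^a * Complex.exp (θ*Complex.I)^a) *
      ((-(c:ℂ))^b * Complex.exp ((-θ:ℝ)*Complex.I)^b)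
      = ((-(c:ℂ))^a * (-(c:ℂ))^b) *
        (Complex.exp (θ*Complex.I)^a * Complex.exp ((-θ:ℝ)*Complex.I)^b) by ring]
  rw [zpow_helper θ a b, ← pow_add, neg_pow]
  push_cast
  ring

/-- the index equivalence -/
def eIdx : ℤ × ℕ ≃ ℕ × ℕ where
  toFun nq := (nq.2 + nq.1.toNat, nq.2 + (-nq.1).toNat)
  invFun pq := ((pq.1 : ℤ) - pq.2, min pq.1 pq.2)
  left_inv := by rintro ⟨n, q⟩; refine Prod.ext ?_ ?_ <;> simp <;> omega
  right_inv := by rintro ⟨p, q⟩; refine Prod.ext ?_ ?_ <;> simp <;> omega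

lemma hasSum_cheb {τ : ℝ} (hτ : 0 ≤ τ) (θ : ℝ) :
    HasSum (fun k : ℕ => (2 * (-1)^k * Real.exp (-τ) * Ibes τ k) * Real.cos (k*θ))
      (Real.exp (-τ*(Real.cos θ+1)) + Real.exp (-τ) * Ibes τ 0) := by
  have hc : (0:ℝ) ≤ τ/2 := by linarith
  set c : ℝ := τ/2 with hcdef
  set z : ℂ := Complex.exp (θ*Complex.I) with hz
  set z' : ℂ := Complex.exp ((-θ:ℝ)*Complex.I) with hz'
  set f : ℕ → ℂ := fun p => (-(c:ℂ) * z)^p / p.factorial with hfdef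
  set g : ℕ → ℂ := fun q => (-(c:ℂ) * z')^q / q.factorial with hgdef
  have hf : HasSum f (Complex.exp (-(c:ℂ) * z)) := by
    rw [Complex.exp_eq_exp_ℂ]; exact NormedSpace.expSeries_div_hasSum_exp _
  have hg : HasSum g (Complex.exp (-(c:ℂ) * z')) := by
    rw [Complex.exp_eq_exp_ℂ]; exact NormedSpace.expSeries_div_hasSum_exp _
  have hnf : Summable (fun p => ‖f p‖) := by
    have : (fun p => ‖f p‖) = fun p => c^p / p.factorial := by
      funext p
      simp [hfdef, hz, norm_div, norm_pow, norm_mul,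
        Complex.norm_exp, abs_of_nonneg hc, Complex.norm_real,
        Complex.norm_natCast]
    rw [this]; exact Real.summable_pow_div_factorial c
  have hng : Summable (fun q => ‖g q‖) := by
    have : (fun q => ‖g q‖) = fun q => c^q / q.factorial := by
      funext q
      simp [hgdef, hz', norm_div, norm_pow, norm_mul,
        Complex.norm_exp, abs_of_nonneg hc, Complex.norm_real,
        Complex.norm_natCast]
    rw [this]; exact Real.summable_pow_div_factorial c
  have hmul : HasSum (fun x : ℕ × ℕ => f x.1 * g x.2)
      (Complex.exp (-(c:ℂ) * z) * Complex.exp (-(c:ℂ) * z')) :=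
    hf.mul hg (summable_mul_of_summable_norm hnf hng)
  have h2 : HasSum ((fun x : ℕ × ℕ => f x.1 * g x.2) ∘ eIdx)
      (Complex.exp (-(c:ℂ) * z) * Complex.exp (-(c:ℂ) * z')) :=
    eIdx.hasSum_iff.mpr hmul
  -- the fibers
  have fiber : ∀ n : ℤ, HasSum (fun q : ℕ => ((fun x : ℕ × ℕ => f x.1 * g x.2) ∘ eIdx) (n, q))
      ((((-1)^n.natAbs * Ibes τ n.natAbs : ℝ) : ℂ) * Complex.exp (n*θ*Complex.I)) := by
    intro n
    have base := (Complex.hasSum_ofReal.mpr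
      ((hasSum_Ibes hτ n.natAbs).mul_left ((-1:ℝ)^n.natAbs))).mul_right
      (Complex.exp (n*θ*Complex.I))
    have hq : (fun q : ℕ => ((fun x : ℕ × ℕ => f x.1 * g x.2) ∘ eIdx) (n, q)) =
        fun q : ℕ => ((((-1:ℝ)^n.natAbs *
          ((τ/2)^(2*q+n.natAbs) / (q.factorial * (q+n.natAbs).factorial)) : ℝ)) : ℂ) *
          Complex.exp (n*θ*Complex.I) := by
      funext q
      show f (q + n.toNat) * g (q + (-n).toNat) = _
      rw [hfdef, hgdef]
      simp only []
      rw [hz, hz', term_eq c θ (q + n.toNat) (q + (-n).toNat)]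
      have hab : (q + n.toNat) + (q + (-n).toNat) = 2*q + n.natAbs := by omega
      have harg : ((q + n.toNat : ℕ):ℂ) - ((q + (-n).toNat : ℕ):ℂ) = (n:ℂ) := by
        have h0 : ((q + n.toNat : ℕ):ℤ) - ((q + (-n).toNat : ℕ):ℤ) = n := by omega
        exact_mod_cast congrArg (fun m : ℤ => (m:ℂ)) h0
      rw [hab, harg]
      have hfacts : ((q + n.toNat).factorial : ℂ) * ((q + (-n).toNat).factorial : ℂ)
          = (q.factorial : ℂ) * ((q + n.natAbs).factorial : ℂ) := by
        rcases le_or_gt 0 n with hn | hn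
        · rw [show (-n).toNat = 0 by omega, show n.toNat = n.natAbs by omega]
          push_cast [Nat.add_zero]; ring
        · rw [show n.toNat = 0 by omega, show (-n).toNat = n.natAbs by omega]
          push_cast [Nat.add_zero]; ring
      have hsgn : ((-1:ℂ))^(2*q + n.natAbs) = (-1)^n.natAbs := by
        rw [pow_add, pow_mul]; simp
      congr 1
      rw [hcdef]
      push_cast
      rw [hfacts, hsgn]
    rw [hq]
    exact base
  have h3 := h2.prod_fiberwise fiber
  have h4 := (h3.mul_left ((Real.exp (-τ) : ℝ) : ℂ)).nat_add_neg
  -- identify the sum with the real statement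
  apply Complex.hasSum_ofReal.mp
  have hfun : (fun k : ℕ => ((((2 * (-1)^k * Real.exp (-τ) * Ibes τ k) * Real.cos (k*θ) : ℝ)) : ℂ))
      = fun k : ℕ =>
        ((Real.exp (-τ) : ℝ) : ℂ) * ((((-1)^(k:ℤ).natAbs * Ibes τ (k:ℤ).natAbs : ℝ) : ℂ) *
          Complex.exp ((k:ℤ)*θ*Complex.I)) +
        ((Real.exp (-τ) : ℝ) : ℂ) * ((((-1)^(-(k:ℤ)).natAbs * Ibes τ (-(k:ℤ)).natAbs : ℝ) : ℂ) *
          Complex.exp ((-(k:ℤ))*θ*Complex.I)) := by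
    funext k
    simp only [Int.natAbs_neg, Int.natAbs_natCast]
    have key : Complex.exp ((((k:ℝ)*θ : ℝ) : ℂ) * Complex.I) +
          Complex.exp (-((((k:ℝ)*θ : ℝ) : ℂ)) * Complex.I)
        = 2 * ((Real.cos (k*θ) : ℝ) : ℂ) := by
      rw [Complex.ofReal_cos]
      exact (Complex.two_cos _).symm
    have e1 : ((k:ℤ):ℂ)*θ*Complex.I = ((((k:ℝ)*θ : ℝ):ℂ)) * Complex.I := by push_cast; ring
    have e2 : ((-(k:ℤ)):ℂ)*θ*Complex.I = -((((k:ℝ)*θ : ℝ)):ℂ) * Complex.I := by push_cast; ring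
    rw [e1, e2]
    calc ((((2 * (-1)^k * Real.exp (-τ) * Ibes τ k) * Real.cos (k*θ) : ℝ)) : ℂ)
        = (((Real.exp (-τ) * ((-1)^k * Ibes τ k) : ℝ)) : ℂ) *
            (2 * ((Real.cos (k*θ) : ℝ) : ℂ)) := by push_cast; ring
      _ = (((Real.exp (-τ) * ((-1)^k * Ibes τ k) : ℝ)) : ℂ) *
            (Complex.exp ((((k:ℝ)*θ : ℝ):ℂ) * Complex.I) +
              Complex.exp (-((((k:ℝ)*θ : ℝ)):ℂ) * Complex.I)) := by
          rw [key]
      _ = _ := by push_cast; ring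
  simp only [Int.cast_neg] at h4
  rw [hfun]
  convert h4 using 1
  · rfl
  -- sum value equality
  have hz'' : z' = Complex.exp (-(θ:ℂ) * Complex.I) := by rw [hz']; norm_num
  have hzz : z + z' = 2 * ((Real.cos θ : ℝ) : ℂ) := by
    rw [hz, hz'', Complex.ofReal_cos]
    exact (Complex.two_cos _).symm
  have hE : Complex.exp (-(c:ℂ) * z) * Complex.exp (-(c:ℂ) * z')
      = ((Real.exp (-τ * (Real.cos θ + 1)) : ℝ) : ℂ) * ((Real.exp τ : ℝ) : ℂ) := by
    rw [← Complex.exp_add]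
    have : -(c:ℂ) * z + -(c:ℂ) * z' = -(c:ℂ) * (z + z') := by ring
    rw [this, hzz, hcdef]
    rw [show (-(((τ/2 : ℝ)):ℂ)) * (2 * ((Real.cos θ : ℝ) : ℂ)) = ((-(τ * Real.cos θ) : ℝ) : ℂ) by
      push_cast; ring]
    rw [← Complex.ofReal_exp, ← Complex.ofReal_mul, ← Real.exp_add]
    norm_cast
    ring_nf
  rw [hE]
  simp only [Int.natAbs_zero, pow_zero, one_mul, Int.cast_zero, zero_mul, Complex.exp_zero,
    mul_one]
  norm_cast
  rw [show Real.exp (-τ) * (Real.exp (-τ * (Real.cos θ + 1)) * Real.exp τ)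
      = Real.exp ((-τ) + (-τ * (Real.cos θ + 1)) + τ) by rw [Real.exp_add, Real.exp_add]; ring]
  ring_nf




noncomputable def ccoef (τ : ℝ) (k : ℕ) : ℝ := 2 * (-1)^k * Real.exp (-τ) * Ibes τ k

lemma abs_ccoef {τ : ℝ} (hτ : 0 ≤ τ) (k : ℕ) : |ccoef τ k| = 2 * Real.exp (-τ) * Ibes τ k := by
  unfold ccoef
  rw [abs_mul, abs_mul, abs_mul]
  rw [abs_of_nonneg (Ibes_nonneg hτ k), abs_of_nonneg (Real.exp_pos _).le]
  rcases Nat.even_or_odd k with hk | hk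
  · rw [hk.neg_one_pow]; norm_num
  · rw [hk.neg_one_pow]; norm_num

lemma summable_abs_ccoef {τ : ℝ} (hτ : 0 ≤ τ) : Summable (fun k => |ccoef τ k|) := by
  have hb : Summable (fun k : ℕ =>
      (2 * Real.exp (-τ) * Real.exp ((τ/2)^2)) * ((τ/2)^k / k.factorial)) :=
    (Real.summable_pow_div_factorial _).mul_left _
  refine Summable.of_nonneg_of_le (fun k => abs_nonneg _) (fun k => ?_) hb
  rw [abs_ccoef hτ k]
  have h1 := Ibes_le hτ k
  have h2 : Real.exp ((τ/2)^2/(k+1)) ≤ Real.exp ((τ/2)^2) := by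
    apply Real.exp_le_exp.mpr
    apply div_le_self (by positivity)
    have h9 : (0:ℝ) ≤ (k:ℝ) := Nat.cast_nonneg k
    linarith
  have h3 : Ibes τ k ≤ (τ/2)^k / k.factorial * Real.exp ((τ/2)^2) := by
    refine h1.trans ?_
    exact mul_le_mul_of_nonneg_left h2 (by positivity)
  calc 2 * Real.exp (-τ) * Ibes τ k
      ≤ 2 * Real.exp (-τ) * ((τ/2)^k / k.factorial * Real.exp ((τ/2)^2)) := by
        apply mul_le_mul_of_nonneg_left h3 (by positivity)
    _ = (2 * Real.exp (-τ) * Real.exp ((τ/2)^2)) * ((τ/2)^k / k.factorial) := by ring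

lemma cos_mul_cos_eq (a b : ℝ) :
    Real.cos a * Real.cos b = (Real.cos (a+b) + Real.cos (a-b)) / 2 := by
  rw [Real.cos_add, Real.cos_sub]; ring

lemma int_cos_eq (n : ℤ) : (∫ θ in (0:ℝ)..Real.pi, Real.cos (n*θ))
    = if n = 0 then Real.pi else 0 := by
  rcases eq_or_ne n 0 with hn | hn
  · simp [hn]
  · rw [if_neg hn]
    have hc : ((n:ℝ)) ≠ 0 := Int.cast_ne_zero.mpr hn
    rw [intervalIntegral.integral_comp_mul_left Real.cos hc]
    rw [integral_cos]
    simp [Real.sin_int_mul_pi]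

lemma integral_cos_ortho (k j : ℕ) :
    (∫ θ in (0:ℝ)..Real.pi, Real.cos (k*θ) * Real.cos (j*θ))
      = if k = j then (if k = 0 then Real.pi else Real.pi/2) else 0 := by
  have hfun : ∀ θ : ℝ, Real.cos (k*θ) * Real.cos (j*θ)
      = (Real.cos ((((k:ℤ)+j) : ℤ) * θ) + Real.cos ((((k:ℤ)-j) : ℤ) * θ)) / 2 := by
    intro θ
    rw [cos_mul_cos_eq]
    push_cast
    ring_nf
  rw [intervalIntegral.integral_congr (g := fun θ =>
      (Real.cos ((((k:ℤ)+j) : ℤ) * θ) + Real.cos ((((k:ℤ)-j) : ℤ) * θ)) / 2)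
    (fun θ _ => hfun θ)]
  have hint : ∀ n : ℤ, IntervalIntegrable (fun θ => Real.cos (n*θ)) MeasureTheory.volume 0 Real.pi :=
    fun n => (Real.continuous_cos.comp (continuous_const.mul continuous_id)).intervalIntegrable _ _
  simp only [div_eq_mul_inv]
  rw [intervalIntegral.integral_mul_const, intervalIntegral.integral_add (hint _) (hint _)]
  rw [int_cos_eq, int_cos_eq]
  rcases eq_or_ne k j with hkj | hkj
  · subst hkj
    rcases eq_or_ne k 0 with hk | hk
    · subst hk; norm_num; ring
    · have h1 : ((k:ℤ) + k) ≠ 0 := by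
        have := Nat.pos_of_ne_zero hk; omega
      rw [if_pos rfl, if_neg h1, if_pos (by ring), if_neg hk]
      ring
  · have h1 : ((k:ℤ) + j) = 0 ↔ (k = 0 ∧ j = 0) := by omega
    have h2 : ((k:ℤ) - j) ≠ 0 := by
      intro h; apply hkj; omega
    rw [if_neg hkj, if_neg h2]
    rcases eq_or_ne ((k:ℤ)+j) 0 with h3 | h3
    · exfalso; apply hkj; omega
    · rw [if_neg h3]; ring

open MeasureTheory in
lemma chebCoeff_eq {τ : ℝ} (hτ : 0 ≤ τ) (j : ℕ) : chebCoeff τ j = ccoef τ j := by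
  have pi_pos := Real.pi_pos
  set e0 : ℝ := Real.exp (-τ) * Ibes τ 0 with he0
  set F : ℝ → ℝ := fun θ => Real.exp (-τ*(Real.cos θ+1)) with hF
  have h1 : ∀ θ : ℝ, (∑' k : ℕ, ccoef τ k * (Real.cos (k*θ) * Real.cos (j*θ)))
      = Real.cos (j*θ) * F θ + e0 * Real.cos (j*θ) := by
    intro θ
    have hs2 := (hasSum_cheb hτ θ).mul_right (Real.cos (j*θ))
    have heq : (fun k : ℕ => ((2 * (-1)^k * Real.exp (-τ) * Ibes τ k) * Real.cos (k*θ))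
        * Real.cos (j*θ)) = (fun k : ℕ => ccoef τ k * (Real.cos (k*θ) * Real.cos (j*θ))) := by
      funext k; rw [ccoef]; ring
    rw [heq] at hs2
    rw [hs2.tsum_eq, hF, he0]; ring
  have hcont : ∀ k : ℕ, Continuous (fun θ : ℝ => ccoef τ k * (Real.cos (k*θ) * Real.cos (j*θ))) := by
    intro k; fun_prop
  have hint : ∀ k : ℕ, Integrable (fun θ : ℝ => ccoef τ k * (Real.cos (k*θ) * Real.cos (j*θ)))
      (volume.restrict (Set.Ioc (0:ℝ) Real.pi)) := fun k => (hcont k).integrableOn_Ioc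
  have hnorm : Summable (fun k : ℕ => ∫ θ in Set.Ioc (0:ℝ) Real.pi,
      ‖ccoef τ k * (Real.cos (k*θ) * Real.cos (j*θ))‖) := by
    refine Summable.of_nonneg_of_le (fun k => integral_nonneg (fun θ => norm_nonneg _))
      (fun k => ?_) ((summable_abs_ccoef hτ).mul_right Real.pi)
    have hle : ∀ θ ∈ Set.Ioc (0:ℝ) Real.pi,
        ‖ccoef τ k * (Real.cos (k*θ) * Real.cos (j*θ))‖ ≤ |ccoef τ k| := by
      intro θ _
      rw [Real.norm_eq_abs, abs_mul, abs_mul]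
      calc |ccoef τ k| * (|Real.cos (k*θ)| * |Real.cos (j*θ)|) ≤ |ccoef τ k| * (1*1) := by
            apply mul_le_mul_of_nonneg_left _ (abs_nonneg _)
            exact mul_le_mul (Real.abs_cos_le_one _) (Real.abs_cos_le_one _) (abs_nonneg _)
              zero_le_one
        _ = |ccoef τ k| := by ring
    calc (∫ θ in Set.Ioc (0:ℝ) Real.pi, ‖ccoef τ k * (Real.cos (k*θ) * Real.cos (j*θ))‖)
        ≤ ∫ _ in Set.Ioc (0:ℝ) Real.pi, |ccoef τ k| := by
          apply setIntegral_mono_on ((hint k).norm) _ measurableSet_Ioc hle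
          exact integrableOn_const measure_Ioc_lt_top.ne
      _ = |ccoef τ k| * Real.pi := by
          rw [setIntegral_const, measureReal_def, Real.volume_Ioc, smul_eq_mul, sub_zero,
            ENNReal.toReal_ofReal pi_pos.le, mul_comm]
  have hswap := integral_tsum_of_summable_integral_norm hint hnorm
  -- evaluate the left side
  have hlhs : (∑' k : ℕ, ∫ θ in Set.Ioc (0:ℝ) Real.pi,
      ccoef τ k * (Real.cos (k*θ) * Real.cos (j*θ)))
      = ccoef τ j * (if j = 0 then Real.pi else Real.pi/2) := by
    have hterm : ∀ k : ℕ, (∫ θ in Set.Ioc (0:ℝ) Real.pi,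
        ccoef τ k * (Real.cos (k*θ) * Real.cos (j*θ)))
        = ccoef τ k * (if k = j then (if k = 0 then Real.pi else Real.pi/2) else 0) := by
      intro k
      rw [← intervalIntegral.integral_of_le pi_pos.le, intervalIntegral.integral_const_mul,
        integral_cos_ortho]
    rw [tsum_eq_single j]
    · rw [hterm j, if_pos rfl]
    · intro k hk
      rw [hterm k, if_neg hk, mul_zero]
  -- evaluate the right side
  have hrhs : (∫ θ in Set.Ioc (0:ℝ) Real.pi, ∑' k : ℕ,
      ccoef τ k * (Real.cos (k*θ) * Real.cos (j*θ)))
      = (∫ θ in (0:ℝ)..Real.pi, Real.cos (j*θ) * F θ)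
        + e0 * (if j = 0 then Real.pi else 0) := by
    simp only [h1]
    rw [← intervalIntegral.integral_of_le pi_pos.le]
    have hi1 : IntervalIntegrable (fun θ => Real.cos (j*θ) * F θ) volume 0 Real.pi := by
      apply Continuous.intervalIntegrable; rw [hF]; fun_prop
    have hi2 : IntervalIntegrable (fun θ => e0 * Real.cos (j*θ)) volume 0 Real.pi := by
      apply Continuous.intervalIntegrable; fun_prop
    rw [intervalIntegral.integral_add hi1 hi2, intervalIntegral.integral_const_mul]
    congr 1
    have : (∫ θ in (0:ℝ)..Real.pi, Real.cos ((j:ℝ)*θ))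
        = ∫ θ in (0:ℝ)..Real.pi, Real.cos (((j:ℤ):ℝ)*θ) := by push_cast; rfl
    rw [this, int_cos_eq]
    simp
  rw [hlhs, hrhs] at hswap
  have hcheb : chebCoeff τ j = (2/Real.pi) * ∫ θ in (0:ℝ)..Real.pi, Real.cos (j*θ) * F θ := rfl
  rcases eq_or_ne j 0 with hj | hj
  · subst hj
    rw [if_pos rfl, if_pos rfl] at hswap
    have hIeq : (∫ θ in (0:ℝ)..Real.pi, Real.cos ((0:ℕ)*θ) * F θ)
        = ccoef τ 0 * Real.pi - e0 * Real.pi := by linarith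
    rw [hcheb, hIeq, he0, ccoef]
    field_simp
    ring
  · rw [if_neg hj, if_neg hj] at hswap
    have hIeq : (∫ θ in (0:ℝ)..Real.pi, Real.cos ((j:ℝ)*θ) * F θ) = ccoef τ j * (Real.pi/2) := by
      linarith
    rw [hcheb, hIeq]
    field_simp






theorem cheb_err {τ : ℝ} (hτ : 0 ≤ τ) {K : ℕ} (hK : (K:ℝ) > τ/2 - 1) {μ : ℝ}
    (h0 : 0 ≤ μ) (h2 : μ ≤ 2) :
    |Real.exp (-τ*μ) - (chebTruncPoly τ K).eval μ| ≤ gBound K τ := by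
  set θ := Real.arccos (μ - 1) with hθ
  have hcos : Real.cos θ = μ - 1 := Real.cos_arccos (by linarith) (by linarith)
  set cf : ℕ → ℝ := fun k => (if k = 0 then chebCoeff τ 0 / 2 else chebCoeff τ k) *
    Real.cos (k*θ) with hcf
  -- evaluation of the truncation
  have heval : (chebTruncPoly τ K).eval μ = ∑ k ∈ Finset.range (K+1), cf k := by
    have hrange : Finset.range (K+1) = insert 0 (Finset.Icc 1 K) := by
      ext x; simp; omega
    rw [hrange, Finset.sum_insert (by simp)]
    have h00 : cf 0 = chebCoeff τ 0 / 2 := by simp [hcf]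
    rw [h00]
    rw [chebTruncPoly]
    rw [Polynomial.eval_add, Polynomial.eval_C, Polynomial.eval_finset_sum]
    congr 1
    apply Finset.sum_congr rfl
    intro k hk
    have hk1 : k ≠ 0 := by simp at hk; omega
    rw [Polynomial.eval_mul, Polynomial.eval_C, Polynomial.eval_comp, Polynomial.eval_sub,
      Polynomial.eval_X, Polynomial.eval_one]
    simp only [hcf, if_neg hk1]
    congr 1
    rw [show μ - 1 = Real.cos θ from hcos.symm, Polynomial.Chebyshev.T_real_cos]
    push_cast
    ring_nf
  -- the full sum
  have hsub : HasSum cf (Real.exp (-τ*μ)) := by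
    have h := (hasSum_cheb hτ θ).sub (hasSum_ite_eq 0 (chebCoeff τ 0 / 2))
    have hfun : (fun k : ℕ => ((2 * (-1)^k * Real.exp (-τ) * Ibes τ k) * Real.cos (k*θ))
        - (if k = 0 then chebCoeff τ 0 / 2 else 0)) = cf := by
      funext k
      rcases eq_or_ne k 0 with hk | hk
      · subst hk
        simp only [hcf, if_true, eq_self_iff_true, Nat.cast_zero, zero_mul, Real.cos_zero,
          mul_one, if_pos]
        rw [chebCoeff_eq hτ 0, ccoef]
        norm_num
        ring
      · simp only [if_neg hk, hcf, sub_zero]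
        rw [chebCoeff_eq hτ k, ccoef]
    have hval : Real.exp (-τ*(Real.cos θ+1)) + Real.exp (-τ) * Ibes τ 0 - chebCoeff τ 0 / 2
        = Real.exp (-τ*μ) := by
      rw [chebCoeff_eq hτ 0, ccoef, hcos]
      ring_nf
    rw [hfun, hval] at h
    exact h
  have hpart : HasSum (fun k => if k ∈ Finset.range (K+1) then cf k else 0)
      (∑ k ∈ Finset.range (K+1), cf k) := by
    have h := hasSum_sum_of_ne_finset_zero
      (f := fun k => if k ∈ Finset.range (K+1) then cf k else 0) (s := Finset.range (K+1)) (L := SummationFilter.unconditional ℕ)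
      (fun b hb => if_neg hb)
    rwa [Finset.sum_congr rfl (fun b hb => if_pos hb)] at h
  have htail := hsub.sub hpart
  set tailf : ℕ → ℝ := fun k => cf k - (if k ∈ Finset.range (K+1) then cf k else 0) with htailf
  -- geometric bound
  set c : ℝ := τ/2 with hc
  have hc0 : 0 ≤ c := by positivity
  have hcK : c < (K:ℝ) + 1 := by rw [hc]; linarith
  set r : ℝ := c / ((K:ℝ)+1) with hr
  have hr0 : 0 ≤ r := by positivity
  have hr1 : r < 1 := by
    rw [hr, div_lt_one (by positivity)]; exact hcK
  set D : ℝ := 2 * Real.exp (c^2/((K:ℝ)+2) - τ) * c^(K+1) / (K+1).factorial with hD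
  have hD0 : 0 ≤ D := by positivity
  set bound : ℕ → ℝ := fun k => if k ∈ Finset.range (K+1) then 0 else D * r^(k - (K+1))
    with hbound
  have hgeo : HasSum (fun n : ℕ => D * r^n) (D * (1-r)⁻¹) :=
    (hasSum_geometric_of_lt_one hr0 hr1).mul_left D
  have hshift : (fun n : ℕ => bound (n + (K+1))) = fun n : ℕ => D * r^n := by
    funext n
    rw [hbound]
    simp only []
    rw [if_neg (by simp; omega), Nat.add_sub_cancel]
  have hboundsum : HasSum bound (D * (1-r)⁻¹) := by
    have h := (hasSum_nat_add_iff (f := bound) (K+1)).mp (hshift ▸ hgeo)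
    have hz : ∑ i ∈ Finset.range (K+1), bound i = 0 := by
      apply Finset.sum_eq_zero
      intro i hi
      rw [hbound]; simp only []; rw [if_pos hi]
    rwa [hz, add_zero] at h
  -- termwise bound
  have hterm : ∀ k : ℕ, |tailf k| ≤ bound k := by
    intro k
    rw [htailf, hbound]
    simp only []
    by_cases hk : k ∈ Finset.range (K+1)
    · rw [if_pos hk, if_pos hk]; simp
    · rw [if_neg hk, if_neg hk, sub_zero]
      have hkK : K + 1 ≤ k := by simpa [Nat.lt_succ_iff, not_lt] using hk
      have hk0 : k ≠ 0 := by omega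
      set j := k - (K+1) with hj
      have hkj : k = (K+1) + j := by omega
      rw [hcf]
      simp only [if_neg hk0]
      rw [abs_mul]
      calc |chebCoeff τ k| * |Real.cos (k*θ)| ≤ |chebCoeff τ k| * 1 := by
            apply mul_le_mul_of_nonneg_left (Real.abs_cos_le_one _) (abs_nonneg _)
        _ = 2 * Real.exp (-τ) * Ibes τ k := by
            rw [mul_one, chebCoeff_eq hτ k, abs_ccoef hτ k]
        _ ≤ 2 * Real.exp (-τ) * ((τ/2)^k / k.factorial * Real.exp ((τ/2)^2/(k+1))) := by
            apply mul_le_mul_of_nonneg_left (Ibes_le hτ k) (by positivity)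
        _ ≤ 2 * Real.exp (-τ) * ((τ/2)^k / k.factorial * Real.exp (c^2/((K:ℝ)+2))) := by
            apply mul_le_mul_of_nonneg_left _ (by positivity)
            apply mul_le_mul_of_nonneg_left _ (by positivity)
            apply Real.exp_le_exp.mpr
            rw [hc]
            apply div_le_div_of_nonneg_left (by positivity) (by positivity)
            have : (K:ℝ) + 1 ≤ (k:ℝ) := by exact_mod_cast hkK
            linarith
        _ ≤ D * r^j := by
            have hfact : ((K+1).factorial : ℝ) * ((K:ℝ)+1)^j ≤ (k.factorial : ℝ) := by
              have hf1 : (K+1).factorial * (K+1)^j ≤ (K+1).factorial * (K+2)^j := by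
                apply Nat.mul_le_mul_left
                exact Nat.pow_le_pow_left (by omega) j
              have hf2 := fact_bound (K+1) j
              have hf3 : j + (K+1) = k := by omega
              rw [hf3] at hf2
              exact_mod_cast le_trans hf1 hf2
            have hgoal2 : D * r^j = 2 * (Real.exp (-τ) * Real.exp (c^2/((K:ℝ)+2))) *
                (c^k / (((K+1).factorial : ℝ) * ((K:ℝ)+1)^j)) := by
              rw [hD, hr, div_pow, Real.exp_sub, Real.exp_neg, hkj, pow_add]
              have he : Real.exp τ ≠ 0 := Real.exp_ne_zero τ
              have hf : ((K+1).factorial : ℝ) ≠ 0 := by positivity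
              have hK1 : ((K:ℝ)+1) ≠ 0 := by positivity
              field_simp
              ring_nf
              rw [mul_assoc _ ((1 + (K:ℝ))⁻¹ ^ j), ← mul_pow, inv_mul_cancel₀ (by positivity), one_pow,
                mul_one]
            rw [hgoal2,
              show (2:ℝ) * Real.exp (-τ) * (c^k / k.factorial * Real.exp (c^2/((K:ℝ)+2)))
                = 2 * (Real.exp (-τ) * Real.exp (c^2/((K:ℝ)+2))) * (c^k / k.factorial) by ring]
            apply mul_le_mul_of_nonneg_left _ (by positivity)
            apply div_le_div_of_nonneg_left (by positivity) (by positivity) hfact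
  -- conclude
  have hsumb : Summable bound := hboundsum.summable
  have hsumt : Summable (fun k => |tailf k|) :=
    Summable.of_nonneg_of_le (fun k => abs_nonneg _) hterm hsumb
  have habs : |Real.exp (-τ*μ) - ∑ k ∈ Finset.range (K+1), cf k| ≤ ∑' k, |tailf k| := by
    rw [← htail.tsum_eq]
    have := norm_tsum_le_tsum_norm (f := tailf) (by simpa [Real.norm_eq_abs] using hsumt)
    simpa [Real.norm_eq_abs] using this
  have hfinal : (∑' k, |tailf k|) ≤ D * (1-r)⁻¹ := by
    rw [← hboundsum.tsum_eq]
    exact Summable.tsum_le_tsum hterm hsumt hsumb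
  have hgb : D * (1-r)⁻¹ = gBound K τ := by
    rw [hD, hr, gBound, ← hc]
    have h1 : (1 - c/((K:ℝ)+1)) = ((K:ℝ)+1-c)/((K:ℝ)+1) := by field_simp
    rw [h1]
    have h2 : ((K:ℝ)+1-c) > 0 := by linarith
    have h3 : ((K+1).factorial : ℝ) = ((K:ℝ)+1) * K.factorial := by
      rw [Nat.factorial_succ]; push_cast; ring
    have hττ : 2*c = τ := by rw [hc]; ring
    rw [h3]
    have h2ne : ((K:ℝ)+1-c) ≠ 0 := ne_of_gt h2
    have hfne : (K.factorial : ℝ) ≠ 0 := by positivity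
    have hKne : ((K:ℝ)+1) ≠ 0 := by positivity
    rw [← hττ]
    field_simp
  rw [heval]
  calc |Real.exp (-τ*μ) - ∑ k ∈ Finset.range (K+1), cf k| ≤ ∑' k, |tailf k| := habs
    _ ≤ D * (1-r)⁻¹ := hfinal
    _ = gBound K τ := hgb


open Matrix





/-- conjugation by a unit, as an algebra homomorphism -/
def unitConjAlgHom {R A : Type*} [CommSemiring R] [Semiring A] [Algebra R A] (u : Aˣ) :
    A →ₐ[R] A where
  toFun a := ↑u * a * ↑u⁻¹
  map_one' := by simp
  map_mul' a b := by
    show ↑u * (a * b) * ↑u⁻¹ = (↑u * a * ↑u⁻¹) * (↑u * b * ↑u⁻¹)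
    simp only [mul_assoc]
    congr 2
    rw [← mul_assoc (↑u⁻¹) (↑u : A), Units.inv_mul, one_mul]
  map_zero' := by simp
  map_add' a b := by show ↑u * (a + b) * ↑u⁻¹ = _; rw [mul_add, add_mul]
  commutes' r := by
    simp [Algebra.algebraMap_eq_smul_one, mul_smul_comm, smul_mul_assoc]

theorem stmt_13 {n : ℕ} (L : Matrix (Fin n) (Fin n) ℝ)
    (hL : L.PosSemidef) (hspec : ∀ μ ∈ spectrum ℝ L, μ ≤ 2)
    (τ : ℝ) (hτ : 0 ≤ τ) (K : ℕ) (hK : (K : ℝ) > τ / 2 - 1)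
    (x : Fin n → ℝ) (hx : x ≠ 0) :
    (∑ i, ((NormedSpace.exp ((-τ) • L) - Polynomial.aeval L (chebTruncPoly τ K)).mulVec x i) ^ 2) /
      (∑ i, ((NormedSpace.exp ((-τ) • L)).mulVec x i) ^ 2) ≤
        gBound K τ ^ 2 * Real.exp (4 * τ) := by
  classical
  have hH : L.IsHermitian := hL.1
  set U : Matrix (Fin n) (Fin n) ℝ := (hH.eigenvectorUnitary : Matrix (Fin n) (Fin n) ℝ) with hUdef
  set d : Fin n → ℝ := hH.eigenvalues with hd
  have hmem := hH.eigenvectorUnitary.2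
  rw [Unitary.mem_iff] at hmem
  have hstar1 : star U * U = 1 := hmem.1
  have hstar2 : U * star U = 1 := hmem.2
  have hUinv : U⁻¹ = star U := Matrix.inv_eq_left_inv hstar1
  have hUnit : IsUnit U := ⟨Unitary.toUnits hH.eigenvectorUnitary, rfl⟩
  have hspec2 : L = U * Matrix.diagonal d * star U := by
    have := hH.spectral_theorem
    simpa using this
  -- conjugated exponential
  have hexp : NormedSpace.exp ((-τ) • L)
      = U * Matrix.diagonal (fun i => Real.exp (-τ * d i)) * star U := by
    have hdm : Matrix.diagonal (fun i => -τ * d i) = (-τ) • Matrix.diagonal d := by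
      rw [← Matrix.diagonal_smul]
      congr 1
    have hsm : (-τ) • L = U * Matrix.diagonal (fun i => -τ * d i) * U⁻¹ := by
      rw [hspec2, hUinv, hdm, Matrix.mul_smul, Matrix.smul_mul]
    rw [hsm, Matrix.exp_conj U _ hUnit, Matrix.exp_diagonal, hUinv]
    congr 2
    rw [Pi.exp_def]
    funext i
    rw [← Real.exp_eq_exp_ℝ]
  set p : Polynomial ℝ := chebTruncPoly τ K with hp
  -- conjugated polynomial evaluation
  have haeval : Polynomial.aeval L p = U * Matrix.diagonal (fun i => p.eval (d i)) * star U := by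
    have hcoe : (hUnit.unit : Matrix (Fin n) (Fin n) ℝ) = U := hUnit.unit_spec
    have hcoeinv : ((hUnit.unit⁻¹ : (Matrix (Fin n) (Fin n) ℝ)ˣ) : Matrix (Fin n) (Fin n) ℝ)
        = star U := by rw [Matrix.coe_units_inv, hcoe, hUinv]
    have hL2 : L = unitConjAlgHom (R := ℝ) hUnit.unit (Matrix.diagonal d) := by
      show L = (hUnit.unit : Matrix (Fin n) (Fin n) ℝ) * Matrix.diagonal d *
        ((hUnit.unit⁻¹ : (Matrix (Fin n) (Fin n) ℝ)ˣ) : Matrix (Fin n) (Fin n) ℝ)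
      rw [hcoe, hcoeinv, hspec2]
    rw [hL2, Polynomial.aeval_algHom_apply]
    have hdiagaeval : Polynomial.aeval (Matrix.diagonal d) p
        = Matrix.diagonal (fun i => p.eval (d i)) := by
      have hdg : Matrix.diagonal d = Matrix.diagonalAlgHom (R := ℝ) d := rfl
      rw [hdg, Polynomial.aeval_algHom_apply]
      show Matrix.diagonal (Polynomial.aeval d p) = _
      have hfn : (Polynomial.aeval d p : Fin n → ℝ) = fun i => p.eval (d i) := by
        funext i
        have h1 : Polynomial.aeval d p i = Polynomial.aeval (d i) p :=
          (Polynomial.aeval_algHom_apply (Pi.evalAlgHom ℝ (fun _ => ℝ) i) d p).symm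
        rw [h1, ← Polynomial.coe_aeval_eq_eval]
      rw [hfn]
    rw [hdiagaeval]
    show (hUnit.unit : Matrix (Fin n) (Fin n) ℝ) * Matrix.diagonal (fun i => p.eval (d i)) *
      ((hUnit.unit⁻¹ : (Matrix (Fin n) (Fin n) ℝ)ˣ) : Matrix (Fin n) (Fin n) ℝ) = _
    rw [hcoe, hcoeinv]
  -- difference as conjugated diagonal
  have hdiff : NormedSpace.exp ((-τ) • L) - Polynomial.aeval L p
      = U * Matrix.diagonal (fun i => Real.exp (-τ * d i) - p.eval (d i)) * star U := by
    rw [hexp, haeval]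
    have : Matrix.diagonal (fun i => Real.exp (-τ*d i) - p.eval (d i))
        = Matrix.diagonal (fun i => Real.exp (-τ*d i)) - Matrix.diagonal (fun i => p.eval (d i)) :=
      (Matrix.diagonal_sub _ _).symm
    rw [this, Matrix.mul_sub, Matrix.sub_mul]
  -- orthogonality preserves sums of squares
  have htr : Uᵀ * U = 1 := by
    calc Uᵀ * U = star U * U := by
          rw [Matrix.star_eq_conjTranspose, Matrix.conjTranspose_eq_transpose_of_trivial]
    _ = 1 := hstar1
  have hsumsq : ∀ w : Fin n → ℝ, (∑ i, (U *ᵥ w) i ^ 2) = ∑ i, w i ^ 2 := by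
    intro w
    have h1 : (∑ i, (U *ᵥ w) i ^2) = (U *ᵥ w) ⬝ᵥ (U *ᵥ w) := by
      simp [dotProduct, pow_two]
    rw [h1, dotProduct_mulVec, ← Matrix.mulVec_transpose, Matrix.mulVec_mulVec, htr,
      Matrix.one_mulVec]
    simp [dotProduct, pow_two]
  set y : Fin n → ℝ := star U *ᵥ x with hy
  have hximg : x = U *ᵥ y := by rw [hy, Matrix.mulVec_mulVec, hstar2, Matrix.one_mulVec]
  have hy0 : y ≠ 0 := fun h => hx (by rw [hximg, h, Matrix.mulVec_zero])
  have hconjsum : ∀ v : Fin n → ℝ,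
      (∑ i, ((U * Matrix.diagonal v * star U) *ᵥ x) i ^2) = ∑ i, (v i * y i)^2 := by
    intro v
    rw [← Matrix.mulVec_mulVec, ← Matrix.mulVec_mulVec, hsumsq]
    apply Finset.sum_congr rfl
    intro i _
    rw [Matrix.mulVec_diagonal]
  -- scalar bounds
  have hd0 : ∀ i, 0 ≤ d i := fun i => hL.eigenvalues_nonneg i
  have hd2 : ∀ i, d i ≤ 2 := fun i => hspec _ (hH.eigenvalues_mem_spectrum_real i)
  have hg0 : 0 ≤ gBound K τ :=
    (abs_nonneg _).trans (cheb_err hτ hK (le_refl (0:ℝ)) (by norm_num))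
  have herr : ∀ i, (Real.exp (-τ * d i) - p.eval (d i))^2 ≤ gBound K τ ^ 2 := by
    intro i
    have h := cheb_err hτ hK (hd0 i) (hd2 i)
    calc (Real.exp (-τ * d i) - p.eval (d i))^2
        = |Real.exp (-τ * d i) - p.eval (d i)|^2 := (sq_abs _).symm
      _ ≤ gBound K τ ^ 2 := pow_le_pow_left₀ (abs_nonneg _) h 2
  -- numerator bound
  have hnum : (∑ i, ((NormedSpace.exp ((-τ) • L) - Polynomial.aeval L p).mulVec x i)^2)
      ≤ gBound K τ ^2 * ∑ i, y i^2 := by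
    rw [hdiff, hconjsum, Finset.mul_sum]
    apply Finset.sum_le_sum
    intro i _
    rw [mul_pow]
    exact mul_le_mul_of_nonneg_right (herr i) (sq_nonneg _)
  -- denominator bound
  have hden : Real.exp (-(4*τ)) * (∑ i, y i ^2)
      ≤ (∑ i, ((NormedSpace.exp ((-τ) • L)).mulVec x i)^2) := by
    rw [hexp, hconjsum, Finset.mul_sum]
    apply Finset.sum_le_sum
    intro i _
    rw [mul_pow]
    apply mul_le_mul_of_nonneg_right _ (sq_nonneg _)
    have h1 : Real.exp (-(2*τ)) ≤ Real.exp (-τ * d i) :=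
      Real.exp_le_exp.mpr (by nlinarith [hd0 i, hd2 i, hτ])
    calc Real.exp (-(4*τ)) = Real.exp (-(2*τ))^2 := by
          rw [pow_two, ← Real.exp_add]; ring_nf
      _ ≤ Real.exp (-τ * d i)^2 := pow_le_pow_left₀ (Real.exp_pos _).le h1 2
  have hypos : 0 < ∑ i, y i^2 := by
    have h := Function.ne_iff.mp hy0
    obtain ⟨i, hi⟩ := h
    exact Finset.sum_pos' (fun j _ => sq_nonneg _)
      ⟨i, Finset.mem_univ i, lt_of_le_of_ne (sq_nonneg _) (Ne.symm (pow_ne_zero 2 hi))⟩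
  have hdenpos : 0 < ∑ i, ((NormedSpace.exp ((-τ) • L)).mulVec x i)^2 :=
    lt_of_lt_of_le (by positivity) hden
  rw [div_le_iff₀ hdenpos]
  have hexpinv : Real.exp (4*τ) * Real.exp (-(4*τ)) = 1 := by
    rw [← Real.exp_add]; norm_num
  calc (∑ i, ((NormedSpace.exp ((-τ) • L) - Polynomial.aeval L p).mulVec x i)^2)
      ≤ gBound K τ ^2 * ∑ i, y i^2 := hnum
    _ = gBound K τ ^2 * Real.exp (4*τ) * (Real.exp (-(4*τ)) * ∑ i, y i^2) := by
        rw [← mul_assoc, mul_assoc (gBound K τ ^2), hexpinv, mul_one]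
    _ ≤ gBound K τ ^2 * Real.exp (4*τ) *
        (∑ i, ((NormedSpace.exp ((-τ) • L)).mulVec x i)^2) := by
        apply mul_le_mul_of_nonneg_left hden (by positivity)
end
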